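/- Let H be a Hilbert space and T ∈ B(H) with σ(T) ⊆ closed unit disk. Then T is power bounded if and only if T satisfies the discrete Gomilko–Shi–Feng condition (GFS)₁: there is C > 0 with ∫₀^{2π}|⟨R(re^{it},T)²x, y⟩|dt ≤ C/(r²−1)‖x‖‖y‖ for all r > 1, x, y ∈ H. -/

import Mathlib

open Complex MeasureTheory Metric
open scoped Real

set_option maxHeartbeats 2000000

namespace GSF

local notation "⟪" x ", " y "⟫" => @inner ℂ _ _ x y

lemma two_pi_pos : (0:ℝ) < 2 * π := by positivity

lemma norm_exp_int_mul (m : ℤ) (t : ℝ) : ‖Complex.exp ((m:ℂ) * t * I)‖ = 1 := by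
  rw [Complex.norm_exp]
  have : ((m:ℂ) * t * I).re = 0 := by simp
  simp [this]

lemma integral_exp_int (m : ℤ) :
    (∫ t in (0:ℝ)..(2*π), Complex.exp ((m:ℂ) * t * I)) = if m = 0 then (2*π:ℂ) else 0 := by
  rcases eq_or_ne m 0 with h | h
  · simp [h]
  · rw [if_neg h]
    have hc : (m:ℂ) * I ≠ 0 := by simp [Complex.ext_iff, h]
    have : ∀ t : ℝ, (m:ℂ) * t * I = ((m:ℂ) * I) * t := by intro t; ring
    simp_rw [this]
    rw [integral_exp_mul_complex hc]
    have h1 : (m:ℂ) * I * (2*π:ℝ) = (m:ℤ) * (2 * π * I) := by push_cast; ring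
    rw [h1, Complex.exp_int_mul_two_pi_mul_I]
    simp

lemma integral_tsum_exp (b : ℕ × ℕ → ℂ) (hb : Summable fun p => ‖b p‖) (m : ℕ × ℕ → ℤ) :
    (∫ t in (0:ℝ)..(2*π), ∑' p : ℕ × ℕ, b p * Complex.exp ((m p : ℂ) * t * I))
      = 2*π * ∑' p : ℕ × ℕ, (if m p = 0 then b p else 0) := by
  have h2π : (0:ℝ) ≤ 2*π := two_pi_pos.le
  rw [intervalIntegral.integral_of_le h2π]
  have hmeas : ∀ p : ℕ × ℕ, AEStronglyMeasurable
      (fun t : ℝ => b p * Complex.exp ((m p : ℂ) * t * I))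
      (volume.restrict (Set.Ioc 0 (2*π))) := by
    intro p
    apply Continuous.aestronglyMeasurable
    exact continuous_const.mul (Complex.continuous_exp.comp (by continuity))
  have hnorm : ∀ (p : ℕ × ℕ) (t : ℝ), ‖b p * Complex.exp ((m p : ℂ) * t * I)‖ = ‖b p‖ := by
    intro p t
    rw [norm_mul, norm_exp_int_mul, mul_one]
  have hlin : ∀ p : ℕ × ℕ,
      (∫⁻ t, ‖b p * Complex.exp ((m p : ℂ) * t * I)‖₊ ∂(volume.restrict (Set.Ioc 0 (2*π))))
        = ENNReal.ofReal ‖b p‖ * ENNReal.ofReal (2*π) := by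
    intro p
    have : ∀ t : ℝ, (‖b p * Complex.exp ((m p : ℂ) * t * I)‖₊ : ENNReal)
        = ENNReal.ofReal ‖b p‖ := by
      intro t
      rw [← ENNReal.ofReal_coe_nnreal, coe_nnnorm, hnorm]
    simp_rw [this]
    rw [MeasureTheory.lintegral_const, Measure.restrict_apply_univ, Real.volume_Ioc]
    norm_num
  have hfin : (∑' p : ℕ × ℕ, ∫⁻ t, ‖b p * Complex.exp ((m p : ℂ) * t * I)‖₊
      ∂(volume.restrict (Set.Ioc 0 (2*π)))) ≠ ⊤ := by
    simp_rw [hlin]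
    rw [ENNReal.tsum_mul_right]
    rw [← ENNReal.ofReal_tsum_of_nonneg (fun p => norm_nonneg _) hb]
    exact ENNReal.mul_ne_top ENNReal.ofReal_ne_top ENNReal.ofReal_ne_top
  rw [MeasureTheory.integral_tsum hmeas hfin]
  rw [tsum_mul_left.symm]
  congr 1
  funext p
  rw [MeasureTheory.integral_const_mul, ← intervalIntegral.integral_of_le h2π,
    integral_exp_int]
  split_ifs <;> ring

lemma conj_exp_int (m : ℤ) (t : ℝ) :
    (starRingEnd ℂ) (Complex.exp ((m:ℂ) * t * I))
      = Complex.exp (((-m : ℤ):ℂ) * t * I) := by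
  rw [← Complex.exp_conj]
  congr 1
  simp [Complex.ext_iff]

lemma exp_int_add (m m' : ℤ) (t : ℝ) :
    Complex.exp ((m:ℂ) * t * I) * Complex.exp ((m':ℂ) * t * I)
      = Complex.exp (((m + m' : ℤ):ℂ) * t * I) := by
  rw [← Complex.exp_add]
  congr 1
  push_cast
  ring

variable {H : Type*} [NormedAddCommGroup H] [InnerProductSpace ℂ H] [CompleteSpace H]

lemma exists_pow_bound (T : H →L[ℂ] H) (hσ : spectrum ℂ T ⊆ closedBall 0 1)
    {s : ℝ} (hs : 1 < s) : ∃ A : ℝ, 0 < A ∧ ∀ k : ℕ, ‖T ^ k‖ ≤ A * s ^ k := by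
  have hs0 : (0:ℝ) < s := by linarith
  have hrad : spectralRadius ℂ T ≤ 1 := by
    refine iSup₂_le fun z hz => ?_
    have hz1 : ‖z‖ ≤ 1 := by simpa [mem_closedBall_zero_iff] using hσ hz
    exact_mod_cast ENNReal.coe_le_one_iff.mpr (by exact_mod_cast hz1)
  have hlt : spectralRadius ℂ T < ENNReal.ofReal s := by
    refine lt_of_le_of_lt hrad ?_
    rw [← ENNReal.ofReal_one]
    exact ENNReal.ofReal_lt_ofReal_iff_of_nonneg zero_le_one |>.mpr hs
  have hev : ∀ᶠ n : ℕ in Filter.atTop,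
      ENNReal.ofReal (‖T ^ n‖ ^ (1/(n:ℝ))) < ENNReal.ofReal s :=
    (spectrum.pow_norm_pow_one_div_tendsto_nhds_spectralRadius T).eventually_lt_const hlt
  obtain ⟨N, hN⟩ := Filter.eventually_atTop.mp hev
  have key : ∀ n : ℕ, N ≤ n → 1 ≤ n → ‖T ^ n‖ ≤ s ^ n := by
    intro n hn h1
    have hn0 : (n:ℝ) ≠ 0 := by positivity
    have h2 : ‖T ^ n‖ ^ (1/(n:ℝ)) < s := by
      have := hN n hn
      rwa [ENNReal.ofReal_lt_ofReal_iff_of_nonneg (by positivity)] at this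
    have h3 : (‖T ^ n‖ ^ (1/(n:ℝ))) ^ (n:ℝ) ≤ s ^ (n:ℝ) :=
      Real.rpow_le_rpow (by positivity) h2.le (by positivity)
    have h4 : (‖T ^ n‖ ^ (1/(n:ℝ))) ^ (n:ℝ) = ‖T ^ n‖ := by
      rw [← Real.rpow_mul (norm_nonneg _), one_div, inv_mul_cancel₀ hn0, Real.rpow_one]
    rw [h4, Real.rpow_natCast] at h3
    exact h3
  refine ⟨1 + ∑ k ∈ Finset.range (N + 1), ‖T ^ k‖, by positivity, fun k => ?_⟩
  set A := 1 + ∑ k ∈ Finset.range (N + 1), ‖T ^ k‖ with hA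
  have hA1 : 1 ≤ A := by
    have : (0:ℝ) ≤ ∑ k ∈ Finset.range (N + 1), ‖T ^ k‖ :=
      Finset.sum_nonneg fun _ _ => norm_nonneg _
    linarith
  have hsk : 1 ≤ s ^ k := one_le_pow₀ hs.le
  rcases le_or_gt (N + 1) k with hk | hk
  · have : ‖T ^ k‖ ≤ s ^ k := key k (by omega) (by omega)
    calc ‖T ^ k‖ ≤ s ^ k := this
    _ ≤ A * s ^ k := le_mul_of_one_le_left (by positivity) hA1
  · have hmem : k ∈ Finset.range (N + 1) := Finset.mem_range.mpr hk
    have : ‖T ^ k‖ ≤ ∑ j ∈ Finset.range (N + 1), ‖T ^ j‖ :=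
      Finset.single_le_sum (fun j _ => norm_nonneg _) hmem
    calc ‖T ^ k‖ ≤ ∑ j ∈ Finset.range (N + 1), ‖T ^ j‖ := this
    _ ≤ A := by rw [hA]; linarith
    _ ≤ A * s ^ k := le_mul_of_one_le_right (by linarith) hsk

lemma hasSum_resolvent (T : H →L[ℂ] H) (hσ : spectrum ℂ T ⊆ closedBall 0 1)
    {lam : ℂ} (h : 1 < ‖lam‖) :
    HasSum (fun k : ℕ => lam⁻¹ ^ (k+1) • T ^ k) (resolvent T lam) := by
  have hlam0 : lam ≠ 0 := by
    intro h0; rw [h0, norm_zero] at h; linarith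
  obtain ⟨s, hs1, hss⟩ : ∃ s : ℝ, 1 < s ∧ s < ‖lam‖ :=
    ⟨(1 + ‖lam‖) / 2, by constructor <;> linarith⟩
  have hs0 : 0 < s := by linarith
  have hl0 : (0:ℝ) < ‖lam‖ := by linarith
  obtain ⟨A, hA0, hA⟩ := exists_pow_bound T hσ hs1
  have hq0 : 0 ≤ s / ‖lam‖ := by positivity
  have hq1 : s / ‖lam‖ < 1 := (div_lt_one hl0).mpr hss
  -- norm bound for terms
  have hnorm : ∀ k : ℕ, ‖lam⁻¹ ^ (k+1) • T ^ k‖ ≤ (A / ‖lam‖) * (s / ‖lam‖) ^ k := by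
    intro k
    rw [norm_smul, norm_pow, norm_inv]
    have h1 : ‖lam‖⁻¹ ^ (k+1) * ‖T ^ k‖ ≤ ‖lam‖⁻¹ ^ (k+1) * (A * s ^ k) := by
      apply mul_le_mul_of_nonneg_left (hA k) (by positivity)
    refine h1.trans (le_of_eq ?_)
    rw [pow_succ, div_pow, div_eq_mul_inv, div_eq_mul_inv]
    ring
  have hsgeom : Summable fun k : ℕ => (A / ‖lam‖) * (s / ‖lam‖) ^ k :=
    (summable_geometric_of_lt_one hq0 hq1).mul_left _
  have hsummable : Summable fun k : ℕ => lam⁻¹ ^ (k+1) • T ^ k :=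
    Summable.of_norm_bounded hsgeom hnorm
  set S := ∑' k : ℕ, lam⁻¹ ^ (k+1) • T ^ k with hSdef
  have hS : HasSum (fun k : ℕ => lam⁻¹ ^ (k+1) • T ^ k) S := hsummable.hasSum
  set g : ℕ → (H →L[ℂ] H) := fun k => lam⁻¹ ^ k • T ^ k with hgdef
  have hg0 : g 0 = 1 := by simp [hgdef]
  have hgtend : Filter.Tendsto g Filter.atTop (nhds 0) := by
    apply squeeze_zero_norm (a := fun k => A * (s/‖lam‖)^k)
    · intro k
      rw [hgdef]
      simp only [norm_smul, norm_pow, norm_inv]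
      calc ‖lam‖⁻¹ ^ k * ‖T ^ k‖ ≤ ‖lam‖⁻¹ ^ k * (A * s ^ k) :=
        mul_le_mul_of_nonneg_left (hA k) (by positivity)
      _ = A * (s/‖lam‖)^k := by rw [div_pow]; field_simp [hl0.ne']; rw [← mul_pow, one_div, inv_mul_cancel₀ hl0.ne', one_pow]
    · have := tendsto_pow_atTop_nhds_zero_of_lt_one hq0 hq1
      simpa using this.const_mul A
  have hmk : ∀ k : ℕ, lam * lam⁻¹ ^ (k+1) = lam⁻¹ ^ k := by
    intro k
    rw [pow_succ, mul_comm lam, mul_assoc, inv_mul_cancel₀ hlam0, mul_one]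
  have hmk2 : ∀ k : ℕ, lam⁻¹ ^ (k+1) * lam = lam⁻¹ ^ k := by
    intro k
    rw [pow_succ, mul_assoc, inv_mul_cancel₀ hlam0, mul_one]
  have hterm1 : ∀ k : ℕ, (algebraMap ℂ (H →L[ℂ] H) lam - T) * (lam⁻¹ ^ (k+1) • T ^ k)
      = g k - g (k+1) := by
    intro k
    rw [Algebra.algebraMap_eq_smul_one, sub_mul, smul_mul_smul_comm, one_mul,
      mul_smul_comm, hmk, ← pow_succ']
  have hterm2 : ∀ k : ℕ, (lam⁻¹ ^ (k+1) • T ^ k) * (algebraMap ℂ (H →L[ℂ] H) lam - T)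
      = g k - g (k+1) := by
    intro k
    rw [Algebra.algebraMap_eq_smul_one, mul_sub, smul_mul_smul_comm, mul_one,
      mul_comm _ lam, smul_mul_assoc, hmk, ← pow_succ]
  have htel : ∀ (a : H →L[ℂ] H), HasSum (fun k => g k - g (k+1)) a → a = 1 := by
    intro a ha
    have h1 := ha.tendsto_sum_nat
    have h2 : ∀ n : ℕ, ∑ k ∈ Finset.range n, (g k - g (k+1)) = g 0 - g n := by
      intro n; exact Finset.sum_range_sub' g n
    simp_rw [h2] at h1
    have h3 : Filter.Tendsto (fun n : ℕ => g 0 - g n) Filter.atTop (nhds (g 0 - 0)) :=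
      (tendsto_const_nhds).sub hgtend
    have := tendsto_nhds_unique h1 h3
    rw [this, hg0, sub_zero]
  have key1 : (algebraMap ℂ (H →L[ℂ] H) lam - T) * S = 1 := by
    apply htel
    have := hS.mul_left (algebraMap ℂ (H →L[ℂ] H) lam - T)
    simpa only [hterm1] using this
  have key2 : S * (algebraMap ℂ (H →L[ℂ] H) lam - T) = 1 := by
    apply htel
    have := hS.mul_right (algebraMap ℂ (H →L[ℂ] H) lam - T)
    simpa only [hterm2] using this
  have hres : resolvent T lam = S := by
    set u : (H →L[ℂ] H)ˣ := ⟨algebraMap ℂ (H →L[ℂ] H) lam - T, S, key1, key2⟩ with hu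
    have : resolvent T lam = Ring.inverse (u : H →L[ℂ] H) := rfl
    rw [this, Ring.inverse_unit]
    rfl
  rw [hres]; exact hS

lemma hasSum_resolvent_apply (T : H →L[ℂ] H) (hσ : spectrum ℂ T ⊆ closedBall 0 1)
    {lam : ℂ} (h : 1 < ‖lam‖) (x : H) :
    HasSum (fun k : ℕ => lam⁻¹ ^ (k+1) • (T ^ k) x) (resolvent T lam x) := by
  have h1 := (hasSum_resolvent T hσ h).mapL (ContinuousLinearMap.apply ℂ H x)
  simpa using h1

lemma hasSum_star_resolvent_apply (T : H →L[ℂ] H) (hσ : spectrum ℂ T ⊆ closedBall 0 1)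
    {lam : ℂ} (h : 1 < ‖lam‖) (y : H) :
    HasSum (fun k : ℕ => (starRingEnd ℂ) (lam⁻¹ ^ (k+1)) • ((star T) ^ k) y)
      ((star (resolvent T lam)) y) := by
  have h1 := (hasSum_resolvent T hσ h).map
    (starAddEquiv : (H →L[ℂ] H) ≃+ (H →L[ℂ] H)) continuous_star
  have h2 : ∀ k : ℕ, starAddEquiv (lam⁻¹ ^ (k+1) • T ^ k)
      = (starRingEnd ℂ) (lam⁻¹ ^ (k+1)) • (star T) ^ k := by
    intro k
    change star (lam⁻¹ ^ (k+1) • T ^ k) = _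
    rw [star_smul, star_pow T]
    rfl
  rw [Function.comp_def] at h1
  simp_rw [h2] at h1
  have h3 := h1.mapL (ContinuousLinearMap.apply ℂ H y)
  exact h3

-- coefficient formulas on the circle

lemma norm_circle (r : ℝ) (hr : 0 < r) (t : ℝ) : ‖(r:ℂ) * Complex.exp (t * I)‖ = r := by
  rw [norm_mul]
  simp [abs_of_pos hr]

lemma coeff_eq (r : ℝ) (hr : 0 < r) (t : ℝ) (k : ℕ) :
    ((r:ℂ) * Complex.exp (t * I))⁻¹ ^ (k+1)
      = ((r⁻¹:ℝ) : ℂ) ^ (k+1) * Complex.exp (((-(k+1) : ℤ) : ℂ) * t * I) := by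
  rw [mul_inv, ← Complex.exp_neg, mul_pow, ← Complex.exp_nat_mul]
  push_cast
  ring_nf

lemma coeff_conj_eq (r : ℝ) (hr : 0 < r) (t : ℝ) (k : ℕ) :
    (starRingEnd ℂ) (((r:ℂ) * Complex.exp (t * I))⁻¹ ^ (k+1))
      = ((r⁻¹:ℝ) : ℂ) ^ (k+1) * Complex.exp ((((k:ℤ)+1 : ℤ) : ℂ) * t * I) := by
  rw [coeff_eq r hr t k, map_mul, map_pow, Complex.conj_ofReal, ← Complex.exp_conj]
  congr 2
  simp [Complex.ext_iff]
  ring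

lemma parseval (r : ℝ) (hr : 1 < r) (ε : ℤ) (hε : ε ≠ 0) (a : ℕ → H) (u : ℝ)
    (hu : ∀ k, ‖a k‖ ≤ u) :
    (∫ t in (0:ℝ)..(2*π),
        ‖∑' k : ℕ, ((((r⁻¹:ℝ)):ℂ) ^ (k+1) * Complex.exp (((ε*(k+1) : ℤ):ℂ) * t * I)) • a k‖^2)
      = 2*π * ∑' k : ℕ, ((r⁻¹:ℝ) ^ (k+1))^2 * ‖a k‖^2 := by
  have hr0 : (0:ℝ) < r := by linarith
  have hu0 : (0:ℝ) ≤ u := (norm_nonneg (a 0)).trans (hu 0)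
  have hq0 : (0:ℝ) ≤ r⁻¹ := by positivity
  have hq1 : r⁻¹ < 1 := inv_lt_one_of_one_lt₀ hr
  set cc : ℂ := ((r⁻¹:ℝ):ℂ) with hcc
  set c : ℕ → ℝ → ℂ := fun k t => cc ^ (k+1) * Complex.exp (((ε*(k+1) : ℤ):ℂ) * t * I)
    with hcdef
  have hcnorm : ∀ (k : ℕ) (t : ℝ), ‖c k t‖ = (r⁻¹) ^ (k+1) := by
    intro k t
    rw [hcdef]
    simp only [norm_mul, norm_pow, hcc]
    rw [norm_exp_int_mul, mul_one, Complex.norm_real, Real.norm_eq_abs, _root_.abs_of_nonneg hq0]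
  have htermnorm : ∀ (t : ℝ) (k : ℕ), ‖c k t • a k‖ ≤ (r⁻¹) ^ (k+1) * u := by
    intro t k
    rw [norm_smul, hcnorm]
    exact mul_le_mul_of_nonneg_left (hu k) (by positivity)
  have hgeo : Summable fun k : ℕ => (r⁻¹) ^ (k+1) * u :=
    ((summable_geometric_of_lt_one hq0 hq1).comp_injective (add_left_injective 1)).mul_right u
  have hsummable : ∀ t : ℝ, Summable fun k => c k t • a k :=
    fun t => Summable.of_norm_bounded hgeo (htermnorm t)
  set g : ℝ → H := fun t => ∑' k : ℕ, c k t • a k with hgdef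
  have hg : ∀ t, HasSum (fun k => c k t • a k) (g t) := fun t => (hsummable t).hasSum
  -- double-sum coefficients
  set bb : ℕ × ℕ → ℂ :=
    fun p => cc ^ (p.1+1) * cc ^ (p.2+1) * (starRingEnd ℂ) ⟪a p.1, a p.2⟫ with hbbdef
  set mm : ℕ × ℕ → ℤ := fun p => ε*(p.1+1) - ε*(p.2+1) with hmmdef
  set b' : ℕ × ℕ → ℝ → ℂ :=
    fun p t => c p.1 t * (starRingEnd ℂ) (c p.2 t) * (starRingEnd ℂ) ⟪a p.1, a p.2⟫ with hb'def
  have hb'eq : ∀ p t, b' p t = bb p * Complex.exp ((mm p : ℂ) * t * I) := by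
    intro p t
    have e1 : c p.1 t = cc ^ (p.1+1) * Complex.exp ((((ε*(p.1+1)) : ℤ) : ℂ) * t * I) := rfl
    have hc2 : (starRingEnd ℂ) (c p.2 t)
        = cc ^ (p.2+1) * Complex.exp ((((-(ε*(p.2+1))) : ℤ) : ℂ) * t * I) := by
      rw [hcdef]
      simp only [map_mul, map_pow, hcc, Complex.conj_ofReal, conj_exp_int]
    have e3 : b' p t = c p.1 t * (starRingEnd ℂ) (c p.2 t)
        * (starRingEnd ℂ) ⟪a p.1, a p.2⟫ := rfl
    rw [e3, e1, hc2]
    rw [show cc ^ (p.1+1) * Complex.exp ((((ε*(p.1+1)) : ℤ) : ℂ) * t * I)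
        * (cc ^ (p.2+1) * Complex.exp ((((-(ε*(p.2+1))) : ℤ) : ℂ) * t * I))
        * (starRingEnd ℂ) ⟪a p.1, a p.2⟫
        = (cc ^ (p.1+1) * cc ^ (p.2+1) * (starRingEnd ℂ) ⟪a p.1, a p.2⟫)
          * (Complex.exp ((((ε*(p.1+1)) : ℤ) : ℂ) * t * I)
            * Complex.exp ((((-(ε*(p.2+1))) : ℤ) : ℂ) * t * I)) from by ring]
    rw [exp_int_add]
    have h2 : (ε*(p.1+1) + -(ε*(p.2+1)) : ℤ) = mm p := by rw [hmmdef]; ring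
    rw [h2]
  have hccn : ‖cc‖ = r⁻¹ := by
    rw [hcc, Complex.norm_real, Real.norm_eq_abs, _root_.abs_of_nonneg hq0]
  have hbbnorm : ∀ p : ℕ × ℕ, ‖bb p‖ ≤ ((r⁻¹)^(p.1+1) * u) * ((r⁻¹)^(p.2+1) * u) := by
    intro p
    rw [hbbdef]
    simp only [norm_mul, norm_pow, RCLike.norm_conj, hccn]
    have h1 : ‖⟪a p.1, a p.2⟫‖ ≤ u * u := by
      refine (norm_inner_le_norm _ _).trans ?_
      exact mul_le_mul (hu _) (hu _) (norm_nonneg _) hu0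
    calc (r⁻¹)^(p.1+1) * (r⁻¹)^(p.2+1) * ‖⟪a p.1, a p.2⟫‖
        ≤ (r⁻¹)^(p.1+1) * (r⁻¹)^(p.2+1) * (u * u) :=
          mul_le_mul_of_nonneg_left h1 (by positivity)
      _ = ((r⁻¹)^(p.1+1) * u) * ((r⁻¹)^(p.2+1) * u) := by ring
  have hprodsum : Summable fun p : ℕ × ℕ => ((r⁻¹)^(p.1+1) * u) * ((r⁻¹)^(p.2+1) * u) :=
    hgeo.mul_of_nonneg hgeo (fun k => by positivity) (fun k => by positivity)
  have hbbsum : Summable fun p : ℕ × ℕ => ‖bb p‖ :=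
    Summable.of_nonneg_of_le (fun p => norm_nonneg _) hbbnorm hprodsum
  -- pointwise expansion of the inner product
  have hb'norm : ∀ (t : ℝ) (p : ℕ × ℕ),
      ‖b' p t‖ ≤ ((r⁻¹)^(p.1+1) * u) * ((r⁻¹)^(p.2+1) * u) := by
    intro t p
    rw [hb'eq]
    rw [norm_mul, norm_exp_int_mul, mul_one]
    exact hbbnorm p
  have hb'sum : ∀ t : ℝ, Summable fun p : ℕ × ℕ => b' p t := by
    intro t
    exact Summable.of_norm_bounded hprodsum (hb'norm t)
  have hpt : ∀ t : ℝ, (⟪g t, g t⟫ : ℂ) = ∑' p : ℕ × ℕ, b' p t := by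
    intro t
    have h1 : HasSum (fun k => c k t * ⟪g t, a k⟫) ⟪g t, g t⟫ := by
      have := (hg t).mapL (innerSL ℂ (g t))
      simpa [inner_smul_right] using this
    have h2 : ∀ k : ℕ, HasSum (fun j => c j t * ⟪a k, a j⟫) ⟪a k, g t⟫ := by
      intro k
      have := (hg t).mapL (innerSL ℂ (a k))
      simpa [inner_smul_right] using this
    have h4 : ∀ k : ℕ, HasSum (fun j => b' (k, j) t) (c k t * ⟪g t, a k⟫) := by
      intro k
      have h3 := ((h2 k).map (starRingEnd ℂ) Complex.continuous_conj).mul_left (c k t)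
      have he : (fun j => c k t * (starRingEnd ℂ ∘ fun j => c j t * ⟪a k, a j⟫) j)
          = fun j => b' (k, j) t := by
        funext j
        simp only [Function.comp_apply, map_mul, hb'def]
        ring
      rw [he] at h3
      rwa [inner_conj_symm] at h3
    have h5 : HasSum (fun k => c k t * ⟪g t, a k⟫) (∑' p : ℕ × ℕ, b' p t) :=
      (hb'sum t).hasSum.prod_fiberwise h4
    exact (h1.unique h5)
  -- the norm squared, as a complex integral
  have hofReal : ∀ t : ℝ, ((‖g t‖^2 : ℝ) : ℂ) = ∑' p : ℕ × ℕ, b' p t := by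
    intro t
    rw [← hpt t, inner_self_eq_norm_sq_to_K]
    norm_cast
  have hint : (∫ t in (0:ℝ)..(2*π), ((‖g t‖^2 : ℝ) : ℂ))
      = 2*π * ∑' p : ℕ × ℕ, (if mm p = 0 then bb p else 0) := by
    rw [show (fun t : ℝ => ((‖g t‖^2 : ℝ) : ℂ)) = fun t : ℝ =>
        ∑' p : ℕ × ℕ, bb p * Complex.exp ((mm p : ℂ) * t * I) from ?_]
    · exact integral_tsum_exp bb hbbsum mm
    · funext t
      rw [hofReal t]
      exact tsum_congr fun p => hb'eq p t
  -- evaluate the diagonal sum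
  set d : ℕ → ℝ := fun k => ((r⁻¹:ℝ) ^ (k+1))^2 * ‖a k‖^2 with hddef
  have hdle : ∀ k : ℕ, d k ≤ (r⁻¹)^(k+1) * u * u := by
    intro k
    rw [hddef]
    have h1 : ((r⁻¹:ℝ)^(k+1))^2 ≤ (r⁻¹)^(k+1) := by
      have := pow_le_one₀ hq0 hq1.le (n := k+1)
      nlinarith [pow_nonneg hq0 (k+1)]
    have h2 : ‖a k‖^2 ≤ u * u := by nlinarith [norm_nonneg (a k), hu k]
    have h3 : (0:ℝ) ≤ (r⁻¹)^(k+1) := by positivity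
    nlinarith [mul_le_mul h1 h2 (by positivity) h3]
  have hd : Summable d :=
    Summable.of_nonneg_of_le (fun k => by positivity) hdle (hgeo.mul_right u)
  have hmm0 : ∀ p : ℕ × ℕ, mm p = 0 ↔ p.1 = p.2 := by
    intro p
    have he : mm p = ε*(p.1+1) - ε*(p.2+1) := rfl
    rw [he, sub_eq_zero]
    constructor
    · intro h1
      have h2 := mul_left_cancel₀ hε h1
      omega
    · intro h0
      rw [h0]
  have hdiagval : ∀ k : ℕ, bb (k, k) = ((d k : ℝ) : ℂ) := by
    intro k
    have h1 : ⟪a k, a k⟫ = ((‖a k‖^2 : ℝ) : ℂ) := by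
      rw [inner_self_eq_norm_sq_to_K]
      norm_cast
    have h2 : bb (k, k) = cc ^ (k+1) * cc ^ (k+1) * (starRingEnd ℂ) ⟪a k, a k⟫ := rfl
    rw [h2, h1, Complex.conj_ofReal, hcc, hddef]
    push_cast
    ring
  have hdiag : (∑' p : ℕ × ℕ, (if mm p = 0 then bb p else 0))
      = ((∑' k : ℕ, d k : ℝ) : ℂ) := by
    have hofd : HasSum (fun k : ℕ => ((d k : ℝ) : ℂ)) (((∑' k, d k : ℝ)) : ℂ) :=
      hd.hasSum.mapL Complex.ofRealCLM
    have hinj : Function.Injective (fun k : ℕ => ((k, k) : ℕ × ℕ)) := by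
      intro a b hab
      simpa using congrArg Prod.fst hab
    have hvan : ∀ p : ℕ × ℕ, p ∉ Set.range (fun k : ℕ => ((k, k) : ℕ × ℕ)) →
        (if mm p = 0 then bb p else 0) = 0 := by
      intro p hp
      have hne : ¬ (mm p = 0) := by
        rw [hmm0]
        intro hc
        exact hp ⟨p.1, Prod.ext rfl hc⟩
      rw [if_neg hne]
    have hcomp : ((fun p : ℕ × ℕ => if mm p = 0 then bb p else 0)
        ∘ (fun k : ℕ => ((k, k) : ℕ × ℕ))) = fun k : ℕ => ((d k : ℝ) : ℂ) := by
      funext k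
      simp only [Function.comp_apply]
      rw [if_pos ((hmm0 (k, k)).mpr rfl), hdiagval]
    have := (Function.Injective.hasSum_iff hinj hvan).mp (hcomp ▸ hofd)
    exact this.tsum_eq
  -- conclude
  have hfinal : ((∫ t in (0:ℝ)..(2*π), ‖g t‖^2 : ℝ) : ℂ)
      = ((2*π * ∑' k : ℕ, d k : ℝ) : ℂ) := by
    rw [← intervalIntegral.integral_ofReal]
    rw [hint, hdiag]
    push_cast
    ring
  have := Complex.ofReal_injective hfinal
  rw [hgdef] at this
  exact this

lemma amgm {β : ℝ} (hβ : 0 < β) (a b : ℝ) (ha : 0 ≤ a) (hb : 0 ≤ b) :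
    a * b ≤ β/2 * a^2 + β⁻¹/2 * b^2 := by
  nlinarith [sq_nonneg (β*a - b), mul_inv_cancel₀ hβ.ne', sq_nonneg b, hβ.le]

lemma geom_sum_eq (r : ℝ) (hr : 1 < r) :
    ∑' k : ℕ, ((r⁻¹:ℝ)^2)^(k+1) = (r^2-1)⁻¹ := by
  have hr0 : (0:ℝ) < r := by linarith
  have hq0 : (0:ℝ) ≤ r⁻¹^2 := by positivity
  have hq1 : (r⁻¹:ℝ)^2 < 1 := by
    have h1 : r⁻¹ < 1 := inv_lt_one_of_one_lt₀ hr
    nlinarith [inv_pos.mpr hr0]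
  have h := tsum_geometric_of_lt_one hq0 hq1
  have h2 : ∀ k : ℕ, ((r⁻¹:ℝ)^2)^(k+1) = (r⁻¹^2) * ((r⁻¹^2)^k) := fun k => pow_succ' _ _
  rw [funext h2, tsum_mul_left, h]
  have hne : r^2 - 1 ≠ 0 := by nlinarith
  field_simp

lemma forward (T : H →L[ℂ] H) (hσ : spectrum ℂ T ⊆ closedBall 0 1)
    {M : ℝ} (hM : ∀ n : ℕ, ‖T ^ n‖ ≤ M) (r : ℝ) (hr : 1 < r) (x y : H) :
    (∫ t in (0:ℝ)..(2*π), ‖(⟪((resolvent T ((r:ℂ) * Complex.exp (t * I)))^2) x, y⟫ : ℂ)‖)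
      ≤ 2*π*(M^2+1) / (r^2-1) * ‖x‖ * ‖y‖ := by
  have hM0 : (0:ℝ) ≤ M := (norm_nonneg _).trans (hM 0)
  have hr0 : (0:ℝ) < r := by linarith
  have hr21 : (0:ℝ) < r^2 - 1 := by nlinarith
  have hRHS : (0:ℝ) ≤ 2*π*(M^2+1) / (r^2-1) * ‖x‖ * ‖y‖ := by positivity
  rcases eq_or_ne x 0 with hx | hx
  · simp [hx]
  rcases eq_or_ne y 0 with hy | hy
  · simp [hy]
  have hxn : (0:ℝ) < ‖x‖ := norm_pos_iff.mpr hx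
  have hyn : (0:ℝ) < ‖y‖ := norm_pos_iff.mpr hy
  set β : ℝ := ‖y‖/‖x‖ with hβdef
  have hβ : 0 < β := by positivity
  set lam : ℝ → ℂ := fun t => (r:ℂ) * Complex.exp (t * I) with hlamdef
  have hlam : ∀ t : ℝ, 1 < ‖lam t‖ := by
    intro t; rw [hlamdef]; simpa [norm_circle r hr0 t, abs_of_pos hr0] using hr
  set ax : ℕ → H := fun k => (T ^ k) x with haxdef
  set ay : ℕ → H := fun k => ((star T) ^ k) y with haydef
  have hax : ∀ k, ‖ax k‖ ≤ M * ‖x‖ := by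
    intro k
    refine (ContinuousLinearMap.le_opNorm _ _).trans ?_
    exact mul_le_mul_of_nonneg_right (hM k) (norm_nonneg x)
  have hay : ∀ k, ‖ay k‖ ≤ M * ‖y‖ := by
    intro k
    refine (ContinuousLinearMap.le_opNorm _ _).trans ?_
    have : ‖(star T) ^ k‖ = ‖T ^ k‖ := by rw [← star_pow, norm_star]
    rw [this]
    exact mul_le_mul_of_nonneg_right (hM k) (norm_nonneg y)
  -- coefficient functions matching `parseval`
  set cx : ℕ → ℝ → ℂ :=
    fun k t => (((r⁻¹:ℝ)):ℂ) ^ (k+1) * Complex.exp ((((-1:ℤ)*(k+1) : ℤ):ℂ) * t * I) with hcxdef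
  set cy : ℕ → ℝ → ℂ :=
    fun k t => (((r⁻¹:ℝ)):ℂ) ^ (k+1) * Complex.exp ((((1:ℤ)*(k+1) : ℤ):ℂ) * t * I) with hcydef
  have hcx_eq : ∀ (t : ℝ) (k : ℕ), (lam t)⁻¹ ^ (k+1) = cx k t := by
    intro t k
    rw [hlamdef, coeff_eq r hr0 t k, hcxdef]
    norm_num
  have hcy_eq : ∀ (t : ℝ) (k : ℕ),
      (starRingEnd ℂ) ((lam t)⁻¹ ^ (k+1)) = cy k t := by
    intro t k
    rw [hlamdef, coeff_conj_eq r hr0 t k, hcydef]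
    norm_num
  have hgx : ∀ t : ℝ, HasSum (fun k => cx k t • ax k) (resolvent T (lam t) x) := by
    intro t
    have h0 := hasSum_resolvent_apply T hσ (hlam t) x
    simpa only [hcx_eq t] using h0
  have hgy : ∀ t : ℝ, HasSum (fun k => cy k t • ay k) ((star (resolvent T (lam t))) y) := by
    intro t
    have h0 := hasSum_star_resolvent_apply T hσ (hlam t) y
    simpa only [hcy_eq t] using h0
  have hres_x : ∀ t : ℝ, resolvent T (lam t) x = ∑' k, cx k t • ax k :=
    fun t => (hgx t).tsum_eq.symm
  have hres_y : ∀ t : ℝ, (star (resolvent T (lam t))) y = ∑' k, cy k t • ay k :=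
    fun t => (hgy t).tsum_eq.symm
  -- continuity
  have hq0 : (0:ℝ) ≤ r⁻¹ := by positivity
  have hq1 : (r⁻¹:ℝ) < 1 := inv_lt_one_of_one_lt₀ hr
  have hsumgeo : ∀ v : ℝ, Summable fun k : ℕ => (r⁻¹:ℝ)^(k+1) * v :=
    fun v => ((summable_geometric_of_lt_one hq0 hq1).comp_injective
      (add_left_injective 1)).mul_right v
  have hccont : ∀ (c : ℕ → ℝ → ℂ) (m : ℕ → ℤ),
      (c = fun (k : ℕ) (t : ℝ) => (((r⁻¹:ℝ)):ℂ) ^ (k+1) * Complex.exp (((m k):ℂ) * t * I)) →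
      ∀ (a : ℕ → H) (v : ℝ), (∀ k, ‖a k‖ ≤ v) →
      Continuous (fun t => ∑' k, c k t • a k) := by
    intro c m hc a v hv
    apply continuous_tsum (u := fun k => (r⁻¹:ℝ)^(k+1) * v)
    · intro k
      rw [hc]
      exact (continuous_const.mul (Complex.continuous_exp.comp (by continuity))).smul
        continuous_const
    · exact hsumgeo v
    · intro k t
      rw [hc, norm_smul, norm_mul, norm_exp_int_mul, mul_one, norm_pow, Complex.norm_real,
        Real.norm_eq_abs, _root_.abs_of_nonneg hq0]
      exact mul_le_mul_of_nonneg_left (hv k) (by positivity)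
  have hcontx : Continuous fun t => ∑' k, cx k t • ax k :=
    hccont cx (fun k => (-1)*(k+1)) hcxdef ax (M*‖x‖) hax
  have hconty : Continuous fun t => ∑' k, cy k t • ay k :=
    hccont cy (fun k => 1*(k+1)) hcydef ay (M*‖y‖) hay
  -- pointwise bound
  have hptb : ∀ t : ℝ, ‖(⟪((resolvent T (lam t))^2) x, y⟫ : ℂ)‖
      ≤ β/2 * ‖∑' k, cx k t • ax k‖^2 + β⁻¹/2 * ‖∑' k, cy k t • ay k‖^2 := by
    intro t
    rw [← hres_x, ← hres_y]
    have h1 : ((resolvent T (lam t))^2) x = resolvent T (lam t) (resolvent T (lam t) x) := by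
      rw [sq, ContinuousLinearMap.mul_apply]
    rw [h1]
    have h2 : (⟪resolvent T (lam t) (resolvent T (lam t) x), y⟫ : ℂ)
        = ⟪resolvent T (lam t) x, (star (resolvent T (lam t))) y⟫ := by
      rw [ContinuousLinearMap.star_eq_adjoint]
      exact (ContinuousLinearMap.adjoint_inner_right _ _ _).symm
    rw [h2]
    exact (norm_inner_le_norm _ _).trans
      (amgm hβ _ _ (norm_nonneg _) (norm_nonneg _))
  -- integrate
  have hintRHS : Continuous fun t : ℝ =>
      β/2 * ‖∑' k, cx k t • ax k‖^2 + β⁻¹/2 * ‖∑' k, cy k t • ay k‖^2 := by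
    exact (continuous_const.mul (hcontx.norm.pow 2)).add (continuous_const.mul (hconty.norm.pow 2))
  have step1 : (∫ t in (0:ℝ)..(2*π), ‖(⟪((resolvent T (lam t))^2) x, y⟫ : ℂ)‖)
      ≤ ∫ t in (0:ℝ)..(2*π),
          (β/2 * ‖∑' k, cx k t • ax k‖^2 + β⁻¹/2 * ‖∑' k, cy k t • ay k‖^2) := by
    rw [intervalIntegral.integral_of_le two_pi_pos.le,
      intervalIntegral.integral_of_le two_pi_pos.le]
    apply integral_mono_of_nonneg
    · exact Filter.Eventually.of_forall fun t => norm_nonneg _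
    · exact hintRHS.integrableOn_Ioc
    · exact Filter.Eventually.of_forall hptb
  have step2 : (∫ t in (0:ℝ)..(2*π),
        (β/2 * ‖∑' k, cx k t • ax k‖^2 + β⁻¹/2 * ‖∑' k, cy k t • ay k‖^2))
      = β/2 * (∫ t in (0:ℝ)..(2*π), ‖∑' k, cx k t • ax k‖^2)
        + β⁻¹/2 * (∫ t in (0:ℝ)..(2*π), ‖∑' k, cy k t • ay k‖^2) := by
    rw [intervalIntegral.integral_add, intervalIntegral.integral_const_mul,
      intervalIntegral.integral_const_mul]
    · exact (continuous_const.mul (hcontx.norm.pow 2)).intervalIntegrable _ _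
    · exact (continuous_const.mul (hconty.norm.pow 2)).intervalIntegrable _ _
  have hPx : (∫ t in (0:ℝ)..(2*π), ‖∑' k, cx k t • ax k‖^2)
      = 2*π * ∑' k : ℕ, ((r⁻¹:ℝ) ^ (k+1))^2 * ‖ax k‖^2 := by
    rw [hcxdef]
    exact parseval r hr (-1) (by norm_num) ax (M*‖x‖) hax
  have hPy : (∫ t in (0:ℝ)..(2*π), ‖∑' k, cy k t • ay k‖^2)
      = 2*π * ∑' k : ℕ, ((r⁻¹:ℝ) ^ (k+1))^2 * ‖ay k‖^2 := by
    rw [hcydef]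
    exact parseval r hr 1 (by norm_num) ay (M*‖y‖) hay
  -- bound the sums
  have hsum_le : ∀ (a : ℕ → H) (v : ℝ), 0 ≤ v → (∀ k, ‖a k‖ ≤ v) →
      (∑' k : ℕ, ((r⁻¹:ℝ) ^ (k+1))^2 * ‖a k‖^2) ≤ v^2 * (r^2-1)⁻¹ := by
    intro a v hv0 hv
    have hterm : ∀ k : ℕ, ((r⁻¹:ℝ) ^ (k+1))^2 * ‖a k‖^2 ≤ v^2 * ((r⁻¹^2):ℝ)^(k+1) := by
      intro k
      have h1 : ‖a k‖^2 ≤ v^2 := by nlinarith [norm_nonneg (a k), hv k]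
      have h2 : ((r⁻¹:ℝ)^(k+1))^2 = ((r⁻¹^2):ℝ)^(k+1) := by ring
      rw [h2]
      have h3 : (0:ℝ) ≤ ((r⁻¹^2):ℝ)^(k+1) := by positivity
      nlinarith [mul_le_mul_of_nonneg_left h1 h3]
    have hsummable1 : Summable fun k : ℕ => ((r⁻¹:ℝ) ^ (k+1))^2 * ‖a k‖^2 := by
      apply Summable.of_nonneg_of_le (fun k => by positivity) hterm
      apply Summable.mul_left
      have hq20 : (0:ℝ) ≤ r⁻¹^2 := by positivity
      have hq21 : (r⁻¹:ℝ)^2 < 1 := by nlinarith [inv_pos.mpr hr0, inv_lt_one_of_one_lt₀ hr]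
      exact (summable_geometric_of_lt_one hq20 hq21).comp_injective (add_left_injective 1)
    have hsummable2 : Summable fun k : ℕ => v^2 * ((r⁻¹^2):ℝ)^(k+1) := by
      apply Summable.mul_left
      have hq20 : (0:ℝ) ≤ r⁻¹^2 := by positivity
      have hq21 : (r⁻¹:ℝ)^2 < 1 := by nlinarith [inv_pos.mpr hr0, inv_lt_one_of_one_lt₀ hr]
      exact (summable_geometric_of_lt_one hq20 hq21).comp_injective (add_left_injective 1)
    calc (∑' k : ℕ, ((r⁻¹:ℝ) ^ (k+1))^2 * ‖a k‖^2)
        ≤ ∑' k : ℕ, v^2 * ((r⁻¹^2):ℝ)^(k+1) := Summable.tsum_le_tsum hterm hsummable1 hsummable2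
      _ = v^2 * ∑' k : ℕ, ((r⁻¹^2):ℝ)^(k+1) := tsum_mul_left
      _ = v^2 * (r^2-1)⁻¹ := by rw [geom_sum_eq r hr]
  have hSx := hsum_le ax (M*‖x‖) (by positivity) hax
  have hSy := hsum_le ay (M*‖y‖) (by positivity) hay
  -- final arithmetic
  have hsum_nonneg : ∀ (a : ℕ → H), (0:ℝ) ≤ ∑' k : ℕ, ((r⁻¹:ℝ) ^ (k+1))^2 * ‖a k‖^2 :=
    fun a => tsum_nonneg (fun k => by positivity)
  calc (∫ t in (0:ℝ)..(2*π), ‖(⟪((resolvent T (lam t))^2) x, y⟫ : ℂ)‖)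
      ≤ β/2 * (2*π * ∑' k : ℕ, ((r⁻¹:ℝ) ^ (k+1))^2 * ‖ax k‖^2)
        + β⁻¹/2 * (2*π * ∑' k : ℕ, ((r⁻¹:ℝ) ^ (k+1))^2 * ‖ay k‖^2) := by
        rw [← hPx, ← hPy]
        exact step1.trans (le_of_eq step2)
    _ ≤ β/2 * (2*π * ((M*‖x‖)^2 * (r^2-1)⁻¹))
        + β⁻¹/2 * (2*π * ((M*‖y‖)^2 * (r^2-1)⁻¹)) := by
        have hb1 : (0:ℝ) ≤ β/2 := by positivity
        have hb2 : (0:ℝ) ≤ β⁻¹/2 := by positivity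
        have t1 : 2*π * (∑' k : ℕ, ((r⁻¹:ℝ) ^ (k+1))^2 * ‖ax k‖^2)
            ≤ 2*π * ((M*‖x‖)^2 * (r^2-1)⁻¹) :=
          mul_le_mul_of_nonneg_left hSx two_pi_pos.le
        have t2 : 2*π * (∑' k : ℕ, ((r⁻¹:ℝ) ^ (k+1))^2 * ‖ay k‖^2)
            ≤ 2*π * ((M*‖y‖)^2 * (r^2-1)⁻¹) :=
          mul_le_mul_of_nonneg_left hSy two_pi_pos.le
        exact add_le_add (mul_le_mul_of_nonneg_left t1 hb1) (mul_le_mul_of_nonneg_left t2 hb2)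
    _ = 2*π*M^2 / (r^2-1) * ‖x‖ * ‖y‖ := by
        rw [hβdef]
        field_simp
        ring
    _ ≤ 2*π*(M^2+1) / (r^2-1) * ‖x‖ * ‖y‖ := by
        have h2 : 2*π*M^2 ≤ 2*π*(M^2+1) := by nlinarith [Real.pi_pos]
        have h1 : 2*π*M^2 / (r^2-1) ≤ 2*π*(M^2+1) / (r^2-1) :=
          by gcongr
        exact mul_le_mul_of_nonneg_right
          (mul_le_mul_of_nonneg_right h1 (norm_nonneg x)) (norm_nonneg y)

lemma fourier_coeff (T : H →L[ℂ] H) (hσ : spectrum ℂ T ⊆ closedBall 0 1)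
    (r : ℝ) (hr : 1 < r) (n : ℕ) (x y : H) :
    (∫ t in (0:ℝ)..(2*π), Complex.exp (((-(n:ℤ)-2 : ℤ):ℂ) * t * I)
        * (⟪((resolvent T ((r:ℂ) * Complex.exp (t * I)))^2) x, y⟫ : ℂ))
      = 2*π * (((n:ℝ)+1) * (((r⁻¹:ℝ):ℂ)^(n+2) * ⟪(T^n) x, y⟫)) := by
  have hr0 : (0:ℝ) < r := by linarith
  obtain ⟨s, hs1, hsr⟩ : ∃ s : ℝ, 1 < s ∧ s < r := ⟨(1+r)/2, by constructor <;> linarith⟩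
  have hs0 : (0:ℝ) < s := by linarith
  obtain ⟨A, hA0, hA⟩ := exists_pow_bound T hσ hs1
  set lam : ℝ → ℂ := fun t => (r:ℂ) * Complex.exp (t * I) with hlamdef
  have hlam : ∀ t : ℝ, 1 < ‖lam t‖ := by
    intro t; rw [hlamdef]; simpa [norm_circle r hr0 t, abs_of_pos hr0] using hr
  set cc : ℂ := ((r⁻¹:ℝ):ℂ) with hcc
  -- coefficients
  set bb : ℕ × ℕ → ℂ :=
    fun p => cc^(p.1+1) * cc^(p.2+1) * ⟪(T^p.2) ((T^p.1) x), y⟫ with hbbdef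
  set mm : ℕ × ℕ → ℤ := fun p => (p.1 : ℤ) + p.2 - n with hmmdef
  -- summability of the double series (norm form)
  have hq0 : (0:ℝ) ≤ r⁻¹ := by positivity
  have hccn : ‖cc‖ = r⁻¹ := by
    rw [hcc, Complex.norm_real, Real.norm_eq_abs, _root_.abs_of_nonneg hq0]
  have hqs0 : (0:ℝ) ≤ s/r := by positivity
  have hqs1 : s/r < 1 := (div_lt_one hr0).mpr hsr
  have hgeos : Summable fun k : ℕ => (s/r)^k := summable_geometric_of_lt_one hqs0 hqs1
  have hbound : ∀ p : ℕ × ℕ, ‖bb p‖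
      ≤ ((A*‖x‖*‖y‖/r) * (s/r)^p.1) * ((A/r) * (s/r)^p.2) := by
    intro p
    have h1 : ‖(⟪(T^p.2) ((T^p.1) x), y⟫ : ℂ)‖ ≤ (A*s^p.2) * ((A*s^p.1) * ‖x‖) * ‖y‖ := by
      refine (norm_inner_le_norm _ _).trans ?_
      have h2 : ‖(T^p.2) ((T^p.1) x)‖ ≤ (A*s^p.2) * ((A*s^p.1) * ‖x‖) := by
        refine (ContinuousLinearMap.le_opNorm _ _).trans ?_
        have h3 : ‖(T^p.1) x‖ ≤ (A*s^p.1) * ‖x‖ := by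
          refine (ContinuousLinearMap.le_opNorm _ _).trans ?_
          exact mul_le_mul_of_nonneg_right (hA p.1) (norm_nonneg x)
        have h4 : ‖T^p.2‖ ≤ A*s^p.2 := hA p.2
        exact mul_le_mul h4 h3 (norm_nonneg _) (by positivity)
      exact mul_le_mul_of_nonneg_right h2 (norm_nonneg y)
    have e1 : bb p = cc^(p.1+1) * cc^(p.2+1) * ⟪(T^p.2) ((T^p.1) x), y⟫ := rfl
    rw [e1, norm_mul, norm_mul, norm_pow, norm_pow, hccn]
    calc r⁻¹^(p.1+1) * r⁻¹^(p.2+1) * ‖(⟪(T^p.2) ((T^p.1) x), y⟫ : ℂ)‖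
        ≤ r⁻¹^(p.1+1) * r⁻¹^(p.2+1) * ((A*s^p.2) * ((A*s^p.1) * ‖x‖) * ‖y‖) := by
          apply mul_le_mul_of_nonneg_left h1 (by positivity)
      _ = ((A*‖x‖*‖y‖/r) * (s/r)^p.1) * ((A/r) * (s/r)^p.2) := by
          rw [div_pow, div_pow, pow_succ, pow_succ]
          simp only [inv_pow]
          field_simp
  have hprodsum : Summable fun p : ℕ × ℕ =>
      ((A*‖x‖*‖y‖/r) * (s/r)^p.1) * ((A/r) * (s/r)^p.2) :=
    (hgeos.mul_left _).mul_of_nonneg (hgeos.mul_left _)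
      (fun k => by positivity) (fun k => by positivity)
  have hbbsum : Summable fun p : ℕ × ℕ => ‖bb p‖ :=
    Summable.of_nonneg_of_le (fun p => norm_nonneg _) hbound hprodsum
  -- the pointwise expansion
  have hpt : ∀ t : ℝ, Complex.exp (((-(n:ℤ)-2 : ℤ):ℂ) * t * I)
      * (⟪((resolvent T (lam t))^2) x, y⟫ : ℂ)
      = ∑' p : ℕ × ℕ, bb p * Complex.exp ((mm p : ℂ) * t * I) := by
    intro t
    set c : ℕ → ℂ := fun k => (lam t)⁻¹ ^ (k+1) with hcdef
    -- HasSum for R applied at a vector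
    have hRv : ∀ v : H, HasSum (fun k => c k • (T^k) v) (resolvent T (lam t) v) :=
      fun v => hasSum_resolvent_apply T hσ (hlam t) v
    -- double sum for R (R x)
    set f : ℕ × ℕ → H := fun p => (c p.1 * c p.2) • ((T^p.2) ((T^p.1) x)) with hfdef
    have hfib : ∀ k : ℕ, HasSum (fun j => f (k, j))
        (c k • resolvent T (lam t) ((T^k) x)) := by
      intro k
      have := (hRv ((T^k) x)).const_smul (c k)
      have he : (fun j => c k • (c j • (T^j) ((T^k) x))) = fun j => f (k, j) := by
        funext j
        rw [hfdef]
        simp only [smul_smul]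
      rwa [← he]
    have hfnorm : ∀ p : ℕ × ℕ, ‖f p‖
        ≤ ((A*‖x‖/r) * (s/r)^p.1) * ((A/r) * (s/r)^p.2) := by
      intro p
      have e1 : ‖f p‖ = ‖c p.1‖ * ‖c p.2‖ * ‖(T^p.2) ((T^p.1) x)‖ := by
        rw [hfdef]
        simp [norm_smul, norm_mul]
      have hcn : ∀ k : ℕ, ‖c k‖ = r⁻¹^(k+1) := by
        intro k
        rw [hcdef]
        simp only [norm_pow, norm_inv, hlamdef]
        rw [norm_circle r hr0 t]
      rw [e1, hcn, hcn]
      have h2 : ‖(T^p.2) ((T^p.1) x)‖ ≤ (A*s^p.2) * ((A*s^p.1) * ‖x‖) := by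
        refine (ContinuousLinearMap.le_opNorm _ _).trans ?_
        have h3 : ‖(T^p.1) x‖ ≤ (A*s^p.1) * ‖x‖ := by
          refine (ContinuousLinearMap.le_opNorm _ _).trans ?_
          exact mul_le_mul_of_nonneg_right (hA p.1) (norm_nonneg x)
        exact mul_le_mul (hA p.2) h3 (norm_nonneg _) (by positivity)
      calc r⁻¹^(p.1+1) * r⁻¹^(p.2+1) * ‖(T^p.2) ((T^p.1) x)‖
          ≤ r⁻¹^(p.1+1) * r⁻¹^(p.2+1) * ((A*s^p.2) * ((A*s^p.1) * ‖x‖)) := by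
            apply mul_le_mul_of_nonneg_left h2 (by positivity)
        _ = ((A*‖x‖/r) * (s/r)^p.1) * ((A/r) * (s/r)^p.2) := by
            rw [div_pow, div_pow, pow_succ, pow_succ]
            simp only [inv_pow]
            field_simp
    have hps : Summable fun p : ℕ × ℕ =>
        ((A*‖x‖/r) * (s/r)^p.1) * ((A/r) * (s/r)^p.2) :=
      (hgeos.mul_left _).mul_of_nonneg (hgeos.mul_left _)
        (fun k => by positivity) (fun k => by positivity)
    have hfsum : Summable f := Summable.of_norm_bounded hps hfnorm
    have hRR : HasSum (fun k => c k • resolvent T (lam t) ((T^k) x))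
        (resolvent T (lam t) (resolvent T (lam t) x)) := by
      have := (hRv x).mapL (resolvent T (lam t))
      simpa using this
    have hfib2 : HasSum (fun k => c k • resolvent T (lam t) ((T^k) x)) (∑' p, f p) :=
      hfsum.hasSum.prod_fiberwise hfib
    have hf : HasSum f (resolvent T (lam t) (resolvent T (lam t) x)) := by
      rw [hRR.unique hfib2]
      exact hfsum.hasSum
    -- inner product with y, conjugated
    have hiy : HasSum (fun p : ℕ × ℕ => (c p.1 * c p.2) * ⟪y, (T^p.2) ((T^p.1) x)⟫)
        ⟪y, resolvent T (lam t) (resolvent T (lam t) x)⟫ := by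
      have := hf.mapL (innerSL ℂ y)
      simpa [hfdef, inner_smul_right] using this
    have hconj : HasSum
        (fun p : ℕ × ℕ => (starRingEnd ℂ) ((c p.1 * c p.2) * ⟪y, (T^p.2) ((T^p.1) x)⟫))
        ((starRingEnd ℂ) ⟪y, resolvent T (lam t) (resolvent T (lam t) x)⟫) :=
      hiy.map (starRingEnd ℂ) Complex.continuous_conj
    have hc2 : (starRingEnd ℂ) ⟪y, resolvent T (lam t) (resolvent T (lam t) x)⟫
        = ⟪((resolvent T (lam t))^2) x, y⟫ := by
      rw [inner_conj_symm, sq, ContinuousLinearMap.mul_apply]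
    rw [hc2] at hconj
    have hmul := hconj.mul_left (Complex.exp (((-(n:ℤ)-2 : ℤ):ℂ) * t * I))
    have hterm : ∀ p : ℕ × ℕ,
        Complex.exp (((-(n:ℤ)-2 : ℤ):ℂ) * t * I)
          * (starRingEnd ℂ) ((c p.1 * c p.2) * ⟪y, (T^p.2) ((T^p.1) x)⟫)
        = bb p * Complex.exp ((mm p : ℂ) * t * I) := by
      intro p
      have hcj : ∀ k : ℕ, (starRingEnd ℂ) (c k)
          = cc^(k+1) * Complex.exp ((((k:ℤ)+1 : ℤ) : ℂ) * t * I) := by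
        intro k
        rw [hcdef]
        exact coeff_conj_eq r hr0 t k
      rw [map_mul, map_mul, hcj, hcj, inner_conj_symm]
      rw [show Complex.exp (((-(n:ℤ)-2 : ℤ):ℂ) * t * I)
          * (cc^(p.1+1) * Complex.exp ((((p.1:ℤ)+1 : ℤ) : ℂ) * t * I)
            * (cc^(p.2+1) * Complex.exp ((((p.2:ℤ)+1 : ℤ) : ℂ) * t * I))
            * ⟪(T^p.2) ((T^p.1) x), y⟫)
          = (cc^(p.1+1) * cc^(p.2+1) * ⟪(T^p.2) ((T^p.1) x), y⟫)
            * (Complex.exp ((((p.1:ℤ)+1 : ℤ) : ℂ) * t * I)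
              * Complex.exp ((((p.2:ℤ)+1 : ℤ) : ℂ) * t * I)
              * Complex.exp (((-(n:ℤ)-2 : ℤ):ℂ) * t * I)) from by ring]
      rw [exp_int_add, exp_int_add]
      have : ((p.1:ℤ)+1 + ((p.2:ℤ)+1) + (-(n:ℤ)-2) : ℤ) = mm p := by
        rw [hmmdef]; ring
      rw [this]
    rw [hmul.tsum_eq.symm]
    exact tsum_congr fun p => hterm p
  -- integrate
  rw [show (fun t : ℝ => Complex.exp (((-(n:ℤ)-2 : ℤ):ℂ) * t * I)
      * (⟪((resolvent T ((r:ℂ) * Complex.exp (t * I)))^2) x, y⟫ : ℂ))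
      = fun t : ℝ => ∑' p : ℕ × ℕ, bb p * Complex.exp ((mm p : ℂ) * t * I) from
    funext fun t => hpt t]
  rw [integral_tsum_exp bb hbbsum mm]
  -- evaluate the diagonal
  have hvan : ∀ p : ℕ × ℕ, p ∉ Finset.HasAntidiagonal.antidiagonal n →
      (if mm p = 0 then bb p else 0) = 0 := by
    intro p hp
    rw [Finset.HasAntidiagonal.mem_antidiagonal] at hp
    rw [if_neg]
    rw [hmmdef]
    simp only []
    omega
  have hval : ∀ p : ℕ × ℕ, p ∈ Finset.HasAntidiagonal.antidiagonal n →
      (if mm p = 0 then bb p else 0) = cc^(n+2) * ⟪(T^n) x, y⟫ := by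
    intro p hp
    rw [Finset.HasAntidiagonal.mem_antidiagonal] at hp
    rw [if_pos (by rw [hmmdef]; simp only []; omega)]
    rw [hbbdef]
    simp only []
    have h1 : (T^p.2) ((T^p.1) x) = (T^n) x := by
      rw [← ContinuousLinearMap.mul_apply, ← pow_add]
      congr 2
      omega
    have h2 : cc^(p.1+1) * cc^(p.2+1) = cc^(n+2) := by
      rw [← pow_add]
      congr 1
      omega
    rw [h1, ← h2]
  rw [tsum_eq_sum hvan]
  rw [Finset.sum_congr rfl hval, Finset.sum_const, Finset.Nat.card_antidiagonal]
  rw [nsmul_eq_mul]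
  push_cast
  ring

lemma backward (T : H →L[ℂ] H) (hσ : spectrum ℂ T ⊆ closedBall 0 1)
    {C : ℝ} (hC : 0 < C)
    (hh : ∀ r : ℝ, 1 < r → ∀ x y : H,
      (∫ t in (0:ℝ)..(2*π),
        ‖(⟪((resolvent T ((r:ℂ) * Complex.exp (t * I)))^2) x, y⟫ : ℂ)‖)
        ≤ C / (r^2-1) * ‖x‖ * ‖y‖) (n : ℕ) :
    ‖T ^ n‖ ≤ C * Real.exp 2 / (4*π) := by
  have hM0 : (0:ℝ) ≤ C * Real.exp 2 / (4*π) := by positivity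
  apply ContinuousLinearMap.opNorm_le_bound _ hM0
  intro x
  set δ : ℝ := 1/((n:ℝ)+1) with hδdef
  have hn1 : (0:ℝ) < (n:ℝ)+1 := by positivity
  have hδ0 : 0 < δ := by positivity
  set r : ℝ := 1 + δ with hrdef
  have hr : 1 < r := by rw [hrdef]; linarith
  have hr0 : (0:ℝ) < r := by linarith
  have hr21 : (0:ℝ) < r^2 - 1 := by nlinarith
  set v : H := (T ^ n) x with hvdef
  -- apply the hypothesis to x, v
  have key0 := hh r hr x v
  -- the Fourier identity with y := v
  have hF := fourier_coeff T hσ r hr n x v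
  have hnormLHS : ‖2*π * (((n:ℝ)+1) * (((r⁻¹:ℝ):ℂ)^(n+2) * ⟪(T^n) x, v⟫))‖
      = 2*π * (((n:ℝ)+1) * ((r⁻¹:ℝ)^(n+2) * ‖v‖^2)) := by
    have h1 : (⟪(T^n) x, v⟫ : ℂ) = ((‖v‖^2 : ℝ) : ℂ) := by
      rw [← hvdef, inner_self_eq_norm_sq_to_K]
      norm_cast
    rw [h1]
    have h2 : (2*π * (((n:ℝ)+1) * (((r⁻¹:ℝ):ℂ)^(n+2) * ((‖v‖^2:ℝ):ℂ))) : ℂ)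
        = (((2*π * (((n:ℝ)+1) * ((r⁻¹:ℝ)^(n+2) * ‖v‖^2))) : ℝ) : ℂ) := by
      push_cast
      ring
    rw [h2, Complex.norm_real, Real.norm_eq_abs,
      _root_.abs_of_nonneg (by positivity : (0:ℝ) ≤ 2*π * (((n:ℝ)+1) * ((r⁻¹:ℝ)^(n+2) * ‖v‖^2)))]
  have hbound1 : ‖∫ t in (0:ℝ)..(2*π), Complex.exp (((-(n:ℤ)-2 : ℤ):ℂ) * t * I)
        * (⟪((resolvent T ((r:ℂ) * Complex.exp (t * I)))^2) x, v⟫ : ℂ)‖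
      ≤ C / (r^2-1) * ‖x‖ * ‖v‖ := by
    refine (intervalIntegral.norm_integral_le_integral_norm two_pi_pos.le).trans ?_
    have he : ∀ t : ℝ, ‖Complex.exp (((-(n:ℤ)-2 : ℤ):ℂ) * t * I)
        * (⟪((resolvent T ((r:ℂ) * Complex.exp (t * I)))^2) x, v⟫ : ℂ)‖
        = ‖(⟪((resolvent T ((r:ℂ) * Complex.exp (t * I)))^2) x, v⟫ : ℂ)‖ := by
      intro t
      rw [norm_mul, norm_exp_int_mul, one_mul]
    rw [intervalIntegral.integral_congr (g := fun t =>
      ‖(⟪((resolvent T ((r:ℂ) * Complex.exp (t * I)))^2) x, v⟫ : ℂ)‖) (fun t _ => he t)]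
    exact key0
  have key : 2*π * (((n:ℝ)+1) * ((r⁻¹:ℝ)^(n+2) * ‖v‖^2)) ≤ C / (r^2-1) * ‖x‖ * ‖v‖ := by
    rw [← hnormLHS]
    rw [hF] at hbound1
    exact hbound1
  -- arithmetic estimates
  have e1 : 2*δ ≤ r^2 - 1 := by rw [hrdef]; nlinarith
  have e2 : C / (r^2-1) ≤ C * ((n:ℝ)+1) / 2 := by
    have h1 : C / (r^2-1) ≤ C / (2*δ) :=
      div_le_div_of_nonneg_left hC.le (by positivity) e1
    refine h1.trans (le_of_eq ?_)
    rw [hδdef]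
    field_simp
  have e3 : (Real.exp 2)⁻¹ ≤ (r⁻¹:ℝ)^(n+2) := by
    have h1 : r ≤ Real.exp δ := by
      have := Real.add_one_le_exp δ
      rw [hrdef]; linarith
    have h2 : r^(n+2) ≤ Real.exp δ ^ (n+2) := pow_le_pow_left₀ hr0.le h1 _
    have h3 : Real.exp δ ^ (n+2) = Real.exp (δ * (n+2)) := by
      rw [← Real.exp_nat_mul]
      congr 1
      push_cast
      ring
    have h4 : δ * ((n:ℝ)+2) ≤ 2 := by
      rw [hδdef]
      rw [div_mul_eq_mul_div, div_le_iff₀ hn1]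
      push_cast
      nlinarith
    have h5 : r^(n+2) ≤ Real.exp 2 := by
      rw [h3] at h2
      exact h2.trans (Real.exp_le_exp.mpr h4)
    rw [inv_pow]
    exact inv_anti₀ (by positivity) h5
  rcases eq_or_lt_of_le (norm_nonneg v) with hv | hv
  · -- ‖v‖ = 0
    calc ‖v‖ = 0 := hv.symm
    _ ≤ C * Real.exp 2 / (4*π) * ‖x‖ := by positivity
  -- main chain
  have chain1 : ((n:ℝ)+1) * (2*π * (Real.exp 2)⁻¹ * ‖v‖^2)
      ≤ ((n:ℝ)+1) * (C/2 * ‖x‖ * ‖v‖) := by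
    calc ((n:ℝ)+1) * (2*π * (Real.exp 2)⁻¹ * ‖v‖^2)
        ≤ ((n:ℝ)+1) * (2*π * ((r⁻¹:ℝ)^(n+2)) * ‖v‖^2) := by
          have h9 := mul_le_mul_of_nonneg_left e3 (le_of_lt two_pi_pos)
          linarith [mul_le_mul_of_nonneg_left
            (mul_le_mul_of_nonneg_right h9 (sq_nonneg ‖v‖)) hn1.le]
      _ = 2*π * (((n:ℝ)+1) * ((r⁻¹:ℝ)^(n+2) * ‖v‖^2)) := by ring
      _ ≤ C / (r^2-1) * ‖x‖ * ‖v‖ := key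
      _ ≤ (C * ((n:ℝ)+1) / 2) * ‖x‖ * ‖v‖ := by
          have h6 : (0:ℝ) ≤ ‖x‖ * ‖v‖ := by positivity
          nlinarith [mul_le_mul_of_nonneg_right (mul_le_mul_of_nonneg_right e2 (norm_nonneg x)) (norm_nonneg v)]
      _ = ((n:ℝ)+1) * (C/2 * ‖x‖ * ‖v‖) := by ring
  have chain2 : 2*π * (Real.exp 2)⁻¹ * ‖v‖^2 ≤ C/2 * ‖x‖ * ‖v‖ :=
    le_of_mul_le_mul_left chain1 hn1
  have chain3 : 2*π * (Real.exp 2)⁻¹ * ‖v‖ ≤ C/2 * ‖x‖ := by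
    have h7 : (2*π * (Real.exp 2)⁻¹ * ‖v‖) * ‖v‖ ≤ (C/2 * ‖x‖) * ‖v‖ := by
      nlinarith [chain2]
    exact le_of_mul_le_mul_right h7 hv
  have hA : (0:ℝ) < 2*π * (Real.exp 2)⁻¹ := by positivity
  have heq : C * Real.exp 2 / (4*π) * ‖x‖ = (C/2 * ‖x‖) / (2*π * (Real.exp 2)⁻¹) := by
    rw [eq_div_iff hA.ne']
    field_simp
    ring
  rw [heq, le_div_iff₀ hA]
  nlinarith [chain3]

end GSF

open Complex MeasureTheory Metric
open scoped Real

/-- On a Hilbert space, an operator with spectrum in the closed unit disk is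
power bounded if and only if it satisfies the discrete Gomilko–Shi–Feng
condition `(GFS)₁`. -/
theorem stmt12 {H : Type*} [NormedAddCommGroup H] [InnerProductSpace ℂ H] [CompleteSpace H]
    (T : H →L[ℂ] H) (hσ : spectrum ℂ T ⊆ closedBall 0 1) :
    (∃ M : ℝ, ∀ n : ℕ, ‖T ^ n‖ ≤ M) ↔
    (∃ C : ℝ, 0 < C ∧ ∀ r : ℝ, 1 < r → ∀ x y : H,
      ∫ t in (0:ℝ)..(2*π),
          ‖(inner ℂ ((resolvent T ((r : ℂ) * exp (t * I)) ^ 2) x) y : ℂ)‖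
        ≤ C / (r^2-1) * ‖x‖ * ‖y‖) := by
  constructor
  · rintro ⟨M, hM⟩
    refine ⟨2*π*(M^2+1), by positivity, fun r hr x y => ?_⟩
    exact GSF.forward T hσ hM r hr x y
  · rintro ⟨C, hC, h⟩
    exact ⟨C * Real.exp 2 / (4*π), GSF.backward T hσ hC h⟩
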